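/- Every sequence S over {O,U} of even length can be transformed, by finitely many reductions (deletions of two consecutive equal letters OO or UU), into an alternating sequence T (one in which no two consecutive letters are equal) with Φ(T) = Φ(S); this alternating sequence T has even length equal to 2·|Φ(S)|. -/

import Mathlib

/-- The two-letter alphabet {O, U}. -/
inductive OULetter : Type
  | O : OULetter
  | U : OULetter
deriving DecidableEq

open OULetter

/-- The sign `ε` of the letter `X` at the (1-indexed) position `i`:
`+1` if (`X = O` and `i` is even) or (`X = U` and `i` is odd), and `-1` otherwise. -/
def eps (X : OULetter) (i : ℕ) : ℤ :=
  match X with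
  | O => if i % 2 = 0 then 1 else -1
  | U => if i % 2 = 1 then 1 else -1

/-- The sign sum `Σ_{i=1}^m ε(X_i)` of a sequence `S = X₁X₂…X_m`. -/
def signSum (S : List OULetter) : ℤ :=
  ∑ j : Fin S.length, eps (S.get j) (j.1 + 1)

/-- The OU number `Φ(S) = (1/2)·Σ_{i=1}^m ε(X_i)` of a sequence `S`. -/
def Phi (S : List OULetter) : ℚ := (signSum S : ℚ) / 2


/-- A single reduction step: deleting two consecutive equal letters. -/
def Reduces (S S' : List OULetter) : Prop :=
  ∃ (A B : List OULetter) (X : OULetter), S = A ++ [X, X] ++ B ∧ S' = A ++ B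

/-- Sign sum with position offset `n`. -/
def gsum : List OULetter → ℕ → ℤ
  | [], _ => 0
  | X :: rest, n => eps X (n + 1) + gsum rest (n + 1)

lemma eps_parity (X : OULetter) {i j : ℕ} (h : i % 2 = j % 2) : eps X i = eps X j := by
  cases X <;> simp [eps, h]

lemma gsum_mod (S : List OULetter) : ∀ n m : ℕ, n % 2 = m % 2 → gsum S n = gsum S m := by
  induction S with
  | nil => intros; rfl
  | cons X rest ih =>
    intro n m h
    have h1 : (n + 1) % 2 = (m + 1) % 2 := by omega
    simp [gsum, ih (n+1) (m+1) h1, eps_parity X h1]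

lemma gsum_append (A B : List OULetter) : ∀ n, gsum (A ++ B) n = gsum A n + gsum B (n + A.length) := by
  induction A with
  | nil => intro n; simp [gsum]
  | cons X rest ih =>
    intro n
    have : n + 1 + rest.length = n + (X :: rest).length := by simp; omega
    simp [gsum, ih (n+1), this]
    ring

lemma signSum_eq_gsum' (S : List OULetter) :
    ∀ n, (∑ j : Fin S.length, eps (S.get j) (n + j.1 + 1)) = gsum S n := by
  induction S with
  | nil => intro n; simp [gsum]
  | cons X rest ih =>
    intro n
    simp only [List.length_cons]
    rw [Fin.sum_univ_succ]
    have he : ∀ j : Fin rest.length,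
        eps ((X :: rest).get j.succ) (n + ↑j.succ + 1) = eps (rest.get j) (n + 1 + ↑j + 1) := by
      intro j
      have h : n + ↑j.succ + 1 = n + 1 + ↑j + 1 := by simp [Fin.val_succ]; omega
      rw [h]
      rfl
    rw [Finset.sum_congr rfl fun j _ => he j, ih (n + 1)]
    simp [gsum]

lemma signSum_eq_gsum (S : List OULetter) : signSum S = gsum S 0 := by
  rw [← signSum_eq_gsum' S 0]
  simp [signSum]

lemma eps_succ_add (X : OULetter) (i : ℕ) : eps X (i + 1) + eps X (i + 2) = 0 := by
  rcases Nat.mod_two_eq_zero_or_one i with h | h <;>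
    cases X <;> simp [eps, Nat.add_mod, h]

lemma signSum_reduce (A B : List OULetter) (X : OULetter) :
    signSum (A ++ [X, X] ++ B) = signSum (A ++ B) := by
  rw [signSum_eq_gsum, signSum_eq_gsum, List.append_assoc, gsum_append, gsum_append]
  simp only [Nat.zero_add]
  have h2 : gsum [X, X] A.length = 0 := by
    have h := eps_succ_add X A.length
    have e : A.length + 1 + 1 = A.length + 2 := by omega
    simp only [gsum, e]
    linarith
  rw [h2, gsum_mod B (A.length + [X, X].length) A.length (by simp [Nat.add_mod]),
    gsum_append A B]
  simp only [Nat.zero_add]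
  ring

lemma no_chain_decomp (S : List OULetter) (h : ¬ S.Chain' (· ≠ ·)) :
    ∃ A B X, S = A ++ [X, X] ++ B := by
  induction S with
  | nil => exact absurd List.isChain_nil h
  | cons x rest ih =>
    cases rest with
    | nil => exact absurd (List.isChain_singleton x) h
    | cons y rest' =>
      by_cases hxy : x = y
      · exact ⟨[], rest', x, by simp [hxy]⟩
      · have : ¬ (y :: rest').Chain' (· ≠ ·) := by
          intro hc
          exact h (List.isChain_cons_cons.mpr ⟨hxy, hc⟩)
        obtain ⟨A, B, X, hA⟩ := ih this
        exact ⟨x :: A, B, X, by simp [hA]⟩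

lemma alt_gsum (rest : List OULetter) : ∀ (X : OULetter) (n : ℕ),
    (X :: rest).Chain' (· ≠ ·) → gsum (X :: rest) n = (rest.length + 1 : ℤ) * eps X (n + 1) := by
  induction rest with
  | nil => intro X n _; simp [gsum]
  | cons Y rest' ih =>
    intro X n hc
    rw [List.Chain', List.isChain_cons_cons] at hc
    have h2 := ih Y (n + 1) hc.2
    have key : eps Y (n + 2) = eps X (n + 1) := by
      cases X <;> cases Y <;> first
        | exact absurd rfl hc.1
        | (rcases Nat.mod_two_eq_zero_or_one n with h | h <;> simp [eps, Nat.add_mod, h])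
    show eps X (n+1) + gsum (Y :: rest') (n+1) = _
    rw [h2, key]
    simp only [List.length_cons]
    push_cast
    ring

/-- Every sequence of even length reduces, by finitely many reductions, to an alternating
sequence T with the same OU number, whose length is twice the absolute value of it. -/
theorem exists_alternating_reduct (S : List OULetter) (heven : Even S.length) :
    ∃ T : List OULetter, Relation.ReflTransGen Reduces S T ∧
      T.Chain' (· ≠ ·) ∧ Phi T = Phi S ∧ (T.length : ℚ) = 2 * |Phi S| := by
  clear heven
  obtain ⟨n, hn⟩ : ∃ n, S.length ≤ n := ⟨S.length, le_refl _⟩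
  induction n generalizing S with
  | zero =>
    have : S = [] := List.length_eq_zero_iff.mp (Nat.le_zero.mp hn)
    subst this
    exact ⟨[], Relation.ReflTransGen.refl, List.isChain_nil, rfl, by simp [Phi, signSum]⟩
  | succ n ih =>
    by_cases hc : S.Chain' (· ≠ ·)
    · refine ⟨S, Relation.ReflTransGen.refl, hc, rfl, ?_⟩
      have habs : |signSum S| = (S.length : ℤ) := by
        cases S with
        | nil => simp [signSum]
        | cons X rest =>
          rw [signSum_eq_gsum, alt_gsum rest X 0 hc, abs_mul]
          have : |eps X (0 + 1)| = 1 := by cases X <;> simp [eps]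
          rw [this, mul_one, abs_of_nonneg (by positivity)]
          simp
      rw [Phi, abs_div]
      rw [show |(signSum S : ℚ)| = ((|signSum S| : ℤ) : ℚ) by push_cast; ring]
      rw [habs]
      push_cast
      rw [show |(2:ℚ)| = 2 by norm_num]
      ring
    · obtain ⟨A, B, X, hS⟩ := no_chain_decomp S hc
      have hlen : (A ++ B).length ≤ n := by
        have := hn
        rw [hS] at this
        simp at this ⊢
        omega
      obtain ⟨T, hred, hT, hPhi, hlenT⟩ := ih (A ++ B) hlen
      have hstep : Reduces S (A ++ B) := ⟨A, B, X, hS, rfl⟩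
      have hPhiS : Phi (A ++ B) = Phi S := by
        rw [Phi, Phi, hS, signSum_reduce]
      exact ⟨T, Relation.ReflTransGen.head hstep hred, hT,
        hPhi.trans hPhiS, by rw [← hPhiS]; exact hlenT⟩
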